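/- Let H, K₁, K₂ be finite-dimensional real inner product spaces, let Q : K₁ → K₂ be linear with Q ∘ Q* = id_{K₂}, let R : H → K₁ be linear, let b, c > 0 and set b' := bc/(b+c), and let A : H → H be self-adjoint positive definite; then A + b'·R*∘Q*∘Q∘R is positive definite, and we set G := (A + b'·R*∘Q*∘Q∘R)⁻¹. For all Φ ∈ K₂ and f ∈ H the function J(ψ, φ) := (b/2)·‖Φ − Qψ‖² + (c/2)·‖ψ − Rφ‖² + (1/2)⟪φ, Aφ⟫ − ⟪f, φ⟫ on K₁ × H has a unique global minimizer (ψ⁰, φ⁰), given by φ⁰ = G(b'·(Q∘R)*Φ + f) and ψ⁰ = Rφ⁰ − (b/(b+c))·Q*Q Rφ⁰ + (b/(b+c))·Q*Φ, and the minimum value is J(ψ⁰, φ⁰) = (b'/2)·‖Φ − QRφ⁰‖² + (1/2)⟪φ⁰, Aφ⁰⟫ − ⟪f, φ⁰⟫. -/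

import Mathlib

open RealInnerProductSpace

set_option maxHeartbeats 1000000 in
/-- Abstract single-step minimization (Lemma 2.3 of the paper): for a
co-isometry `Q` (i.e. `Q ∘ Q* = id`), a linear map `R`, constants `b, c > 0` with
`b' = bc/(b+c)`, and a self-adjoint positive definite `A`, the operator
`M = A + b'·R*∘Q*∘Q∘R` is positive definite (hence invertible, with inverse `G`), and the
functional `J(ψ, φ) = (b/2)‖Φ − Qψ‖² + (c/2)‖ψ − Rφ‖² + (1/2)⟪φ, Aφ⟫ − ⟪f, φ⟫` has the
unique global minimizer `(ψ⁰, φ⁰)` with `φ⁰ = G(b'·(QR)*Φ + f)`,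
`ψ⁰ = Rφ⁰ − (b/(b+c))Q*QRφ⁰ + (b/(b+c))Q*Φ`, and minimum value
`(b'/2)‖Φ − QRφ⁰‖² + (1/2)⟪φ⁰, Aφ⁰⟫ − ⟪f, φ⁰⟫`. -/
theorem single_step_minimization
    {H K₁ K₂ : Type*}
    [NormedAddCommGroup H] [InnerProductSpace ℝ H] [FiniteDimensional ℝ H]
    [NormedAddCommGroup K₁] [InnerProductSpace ℝ K₁] [FiniteDimensional ℝ K₁]
    [NormedAddCommGroup K₂] [InnerProductSpace ℝ K₂] [FiniteDimensional ℝ K₂]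
    (Q : K₁ →ₗ[ℝ] K₂) (hQ : Q ∘ₗ LinearMap.adjoint Q = LinearMap.id)
    (R : H →ₗ[ℝ] K₁)
    (b c : ℝ) (hb : 0 < b) (hc : 0 < c)
    (A : H →ₗ[ℝ] H)
    (hA_symm : ∀ x y : H, ⟪A x, y⟫ = ⟪x, A y⟫)
    (hA_pos : ∀ x : H, x ≠ 0 → 0 < ⟪x, A x⟫) :
    let b' : ℝ := b * c / (b + c)
    let M : H →ₗ[ℝ] H :=
      A + b' • (LinearMap.adjoint R ∘ₗ LinearMap.adjoint Q ∘ₗ Q ∘ₗ R)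
    (∀ x : H, x ≠ 0 → 0 < ⟪x, M x⟫) ∧
    (∃ G : H →ₗ[ℝ] H, M ∘ₗ G = LinearMap.id ∧ G ∘ₗ M = LinearMap.id) ∧
    ∀ G : H →ₗ[ℝ] H, M ∘ₗ G = LinearMap.id → G ∘ₗ M = LinearMap.id →
      ∀ (Φ : K₂) (f : H),
        let J : K₁ → H → ℝ := fun ψ φ =>
          b / 2 * ‖Φ - Q ψ‖ ^ 2 + c / 2 * ‖ψ - R φ‖ ^ 2
            + 1 / 2 * ⟪φ, A φ⟫ - ⟪f, φ⟫
        let φ0 : H := G (b' • LinearMap.adjoint (Q ∘ₗ R) Φ + f)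
        let ψ0 : K₁ := R φ0 - (b / (b + c)) • LinearMap.adjoint Q (Q (R φ0))
            + (b / (b + c)) • LinearMap.adjoint Q Φ
        (∀ (ψ : K₁) (φ : H), (ψ, φ) ≠ (ψ0, φ0) → J ψ0 φ0 < J ψ φ) ∧
          J ψ0 φ0 = b' / 2 * ‖Φ - Q (R φ0)‖ ^ 2 + 1 / 2 * ⟪φ0, A φ0⟫ - ⟪f, φ0⟫ := by
  intro b' M
  have hbc : (0:ℝ) < b + c := by linarith
  have hbcne : b + c ≠ 0 := ne_of_gt hbc
  have hb'def : b' = b * c / (b + c) := rfl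
  have hb'pos : 0 < b' := by rw [hb'def]; positivity
  have hQQ : ∀ y : K₂, Q (LinearMap.adjoint Q y) = y := by
    intro y
    have := LinearMap.ext_iff.mp hQ y
    simpa using this
  have hMapp : ∀ x : H,
      M x = A x + b' • (LinearMap.adjoint R (LinearMap.adjoint Q (Q (R x)))) := fun x => rfl
  have hMinner : ∀ x y : H, ⟪x, M y⟫ = ⟪x, A y⟫ + b' * ⟪Q (R x), Q (R y)⟫ := by
    intro x y
    rw [hMapp, inner_add_right, real_inner_smul_right, LinearMap.adjoint_inner_right,
      LinearMap.adjoint_inner_right]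
  have hMpos : ∀ x : H, x ≠ 0 → 0 < ⟪x, M x⟫ := by
    intro x hx
    rw [hMinner]
    have h1 := hA_pos x hx
    have h2 : (0:ℝ) ≤ ⟪Q (R x), Q (R x)⟫ := real_inner_self_nonneg
    nlinarith
  have hMsymm : ∀ x y : H, ⟪M x, y⟫ = ⟪x, M y⟫ := by
    intro x y
    calc ⟪M x, y⟫ = ⟪y, M x⟫ := real_inner_comm _ _
      _ = ⟪y, A x⟫ + b' * ⟪Q (R y), Q (R x)⟫ := hMinner y x
      _ = ⟪x, A y⟫ + b' * ⟪Q (R x), Q (R y)⟫ := by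
          have h1 : ⟪y, A x⟫ = ⟪x, A y⟫ := by rw [← hA_symm]; exact real_inner_comm _ _
          have h2 : ⟪Q (R y), Q (R x)⟫ = ⟪Q (R x), Q (R y)⟫ := real_inner_comm _ _
          rw [h1, h2]
      _ = ⟪x, M y⟫ := (hMinner x y).symm
  have hMinj : Function.Injective M := by
    intro x y hxy
    by_contra hne
    have hx : x - y ≠ 0 := sub_ne_zero.mpr hne
    have h0 : M (x - y) = 0 := by rw [map_sub, hxy, sub_self]
    have := hMpos _ hx
    rw [h0, inner_zero_right] at this
    exact lt_irrefl 0 this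
  have hMsurj : Function.Surjective M := LinearMap.injective_iff_surjective.mp hMinj
  refine ⟨hMpos, ?_, ?_⟩
  · let e := LinearEquiv.ofBijective M ⟨hMinj, hMsurj⟩
    refine ⟨e.symm.toLinearMap, ?_, ?_⟩
    · ext x
      have h := e.apply_symm_apply x
      exact h
    · ext x
      have h := e.symm_apply_apply x
      exact h
  · intro G hG1 hG2 Φ f J φ0 ψ0
    have hGM : ∀ x, M (G x) = x := by
      intro x
      have := LinearMap.ext_iff.mp hG1 x
      simpa using this
    have hJdef : ∀ (ψ : K₁) (φ : H), J ψ φ =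
        b / 2 * ‖Φ - Q ψ‖ ^ 2 + c / 2 * ‖ψ - R φ‖ ^ 2
          + 1 / 2 * ⟪φ, A φ⟫ - ⟪f, φ⟫ := fun _ _ => rfl
    have hψ0def : ψ0 = R φ0 - (b / (b + c)) • LinearMap.adjoint Q (Q (R φ0))
        + (b / (b + c)) • LinearMap.adjoint Q Φ := rfl
    have hφ0M : M φ0 = b' • LinearMap.adjoint R (LinearMap.adjoint Q Φ) + f := by
      show M (G (b' • LinearMap.adjoint (Q ∘ₗ R) Φ + f)) = _
      rw [hGM, LinearMap.adjoint_comp]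
      rfl
    set Kf : H → ℝ := fun φ => b' / 2 * ‖Φ - Q (R φ)‖ ^ 2 + 1 / 2 * ⟪φ, A φ⟫ - ⟪f, φ⟫
      with hKfdef
    have hKfφ : ∀ φ : H, Kf φ = b' / 2 * ‖Φ - Q (R φ)‖ ^ 2 + 1 / 2 * ⟪φ, A φ⟫ - ⟪f, φ⟫ :=
      fun φ => rfl
    -- quadratic form of Kf
    have hKquad : ∀ φ : H, Kf φ = 1/2 * ⟪φ, M φ⟫ - ⟪M φ0, φ⟫ + b'/2 * ‖Φ‖^2 := by
      intro φ
      rw [hKfφ, hφ0M, hMinner]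
      rw [norm_sub_sq_real, real_inner_self_eq_norm_sq]
      rw [inner_add_left, real_inner_smul_left, LinearMap.adjoint_inner_left,
        LinearMap.adjoint_inner_left]
      ring
    have lemII : ∀ φ : H, Kf φ = Kf φ0 + 1/2 * ⟪φ - φ0, M (φ - φ0)⟫ := by
      intro φ
      rw [hKquad, hKquad]
      have hexp : ⟪φ - φ0, M (φ - φ0)⟫ = ⟪φ, M φ⟫ - 2*⟪M φ0, φ⟫ + ⟪φ0, M φ0⟫ := by
        rw [map_sub, inner_sub_left, inner_sub_right, inner_sub_right]
        have h1 : ⟪φ0, M φ⟫ = ⟪M φ0, φ⟫ := (hMsymm φ0 φ).symm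
        have h2 : ⟪φ, M φ0⟫ = ⟪M φ0, φ⟫ := real_inner_comm _ _
        rw [h1, h2]; ring
      have h3 : ⟪M φ0, φ0⟫ = ⟪φ0, M φ0⟫ := real_inner_comm _ _
      rw [hexp, h3]; ring
    -- the ψ-splitting identity
    have lemI : ∀ (ψ v : K₁),
        b / 2 * ‖Φ - Q ψ‖ ^ 2 + c / 2 * ‖ψ - v‖ ^ 2
          = b' / 2 * ‖Φ - Q v‖ ^ 2
            + (b + c) / 2 * ‖LinearMap.adjoint Q (Q ψ)
                - ((b/(b+c)) • LinearMap.adjoint Q Φ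
                  + (c/(b+c)) • LinearMap.adjoint Q (Q v))‖ ^ 2
            + c / 2 * ‖(ψ - v) - LinearMap.adjoint Q (Q (ψ - v))‖ ^ 2 := by
      intro ψ v
      simp only [← real_inner_self_eq_norm_sq]
      simp only [inner_sub_left, inner_sub_right, inner_add_left, inner_add_right,
        real_inner_smul_left, real_inner_smul_right, LinearMap.adjoint_inner_left,
        LinearMap.adjoint_inner_right, map_sub, map_add, map_smul, hQQ, smul_eq_mul]
      rw [real_inner_comm (Q ψ) Φ, real_inner_comm (Q v) Φ, real_inner_comm (Q v) (Q ψ),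
        real_inner_comm v ψ]
      rw [hb'def]
      field_simp
      ring
    -- master identity
    have master : ∀ (ψ : K₁) (φ : H),
        J ψ φ = Kf φ0 + 1/2 * ⟪φ - φ0, M (φ - φ0)⟫
          + (b + c) / 2 * ‖LinearMap.adjoint Q (Q ψ)
              - ((b/(b+c)) • LinearMap.adjoint Q Φ
                + (c/(b+c)) • LinearMap.adjoint Q (Q (R φ)))‖ ^ 2
          + c / 2 * ‖(ψ - R φ) - LinearMap.adjoint Q (Q (ψ - R φ))‖ ^ 2 := by
      intro ψ φ
      have h1 := lemI ψ (R φ)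
      have h2 := lemII φ
      have h3 := hKfφ φ
      rw [hJdef]
      linarith
    -- vanishing of the squares at (ψ0, φ0)
    have hv1 : LinearMap.adjoint Q (Q ψ0)
        - ((b/(b+c)) • LinearMap.adjoint Q Φ
          + (c/(b+c)) • LinearMap.adjoint Q (Q (R φ0))) = 0 := by
      rw [hψ0def]
      simp only [map_sub, map_add, map_smul, hQQ]
      match_scalars <;> field_simp <;> ring
    have hv2 : (ψ0 - R φ0) - LinearMap.adjoint Q (Q (ψ0 - R φ0)) = 0 := by
      rw [hψ0def]
      simp only [map_sub, map_add, map_smul, hQQ]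
      abel
    have hmin_eq : J ψ0 φ0 = Kf φ0 := by
      rw [master ψ0 φ0, hv1, hv2, sub_self]
      simp
    refine ⟨?_, ?_⟩
    · intro ψ φ hne
      rw [hmin_eq, master ψ φ]
      by_cases hφ : φ = φ0
      · rw [hφ]
        have hψ : ψ ≠ ψ0 := fun h => hne (by rw [h, hφ])
        have hquad : ⟪φ0 - φ0, M (φ0 - φ0)⟫ = 0 := by
          rw [sub_self, map_zero, inner_zero_right]
        have hnotboth : ¬ (LinearMap.adjoint Q (Q ψ)
            - ((b/(b+c)) • LinearMap.adjoint Q Φ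
              + (c/(b+c)) • LinearMap.adjoint Q (Q (R φ0))) = 0
            ∧ (ψ - R φ0) - LinearMap.adjoint Q (Q (ψ - R φ0)) = 0) := by
          rintro ⟨h1, h2⟩
          apply hψ
          have e1 : LinearMap.adjoint Q (Q ψ)
              = (b/(b+c)) • LinearMap.adjoint Q Φ
                + (c/(b+c)) • LinearMap.adjoint Q (Q (R φ0)) := sub_eq_zero.mp h1
          have e2 : ψ - R φ0 = LinearMap.adjoint Q (Q (ψ - R φ0)) := sub_eq_zero.mp h2
          rw [map_sub, map_sub, e1] at e2
          have e3 : ψ = R φ0 + ((b/(b+c)) • LinearMap.adjoint Q Φ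
              + (c/(b+c)) • LinearMap.adjoint Q (Q (R φ0))
              - LinearMap.adjoint Q (Q (R φ0))) := by
            rw [← e2]; abel
          rw [e3, hψ0def]
          match_scalars <;> field_simp <;> ring
        have hpos : 0 < (b + c) / 2 * ‖LinearMap.adjoint Q (Q ψ)
            - ((b/(b+c)) • LinearMap.adjoint Q Φ
              + (c/(b+c)) • LinearMap.adjoint Q (Q (R φ0)))‖ ^ 2
            + c / 2 * ‖(ψ - R φ0) - LinearMap.adjoint Q (Q (ψ - R φ0))‖ ^ 2 := by
          have hs1 : (0:ℝ) ≤ ‖LinearMap.adjoint Q (Q ψ)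
              - ((b/(b+c)) • LinearMap.adjoint Q Φ
                + (c/(b+c)) • LinearMap.adjoint Q (Q (R φ0)))‖ ^ 2 := by positivity
          have hs2 : (0:ℝ) ≤ ‖(ψ - R φ0) - LinearMap.adjoint Q (Q (ψ - R φ0))‖ ^ 2 := by
            positivity
          rcases not_and_or.mp hnotboth with h | h
          · have h' : 0 < ‖LinearMap.adjoint Q (Q ψ)
                - ((b/(b+c)) • LinearMap.adjoint Q Φ
                  + (c/(b+c)) • LinearMap.adjoint Q (Q (R φ0)))‖ ^ 2 := by
              have := norm_pos_iff.mpr h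
              positivity
            nlinarith
          · have h' : 0 < ‖(ψ - R φ0) - LinearMap.adjoint Q (Q (ψ - R φ0))‖ ^ 2 := by
              have := norm_pos_iff.mpr h
              positivity
            nlinarith
        rw [hquad]
        linarith
      · have hd : φ - φ0 ≠ 0 := sub_ne_zero.mpr hφ
        have hquad := hMpos _ hd
        have hs1 : (0:ℝ) ≤ (b + c) / 2 * ‖LinearMap.adjoint Q (Q ψ)
            - ((b/(b+c)) • LinearMap.adjoint Q Φ
              + (c/(b+c)) • LinearMap.adjoint Q (Q (R φ)))‖ ^ 2 := by positivity
        have hs2 : (0:ℝ) ≤ c / 2 * ‖(ψ - R φ) - LinearMap.adjoint Q (Q (ψ - R φ))‖ ^ 2 := by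
          positivity
        linarith
    · exact hmin_eq
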